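/- The SU(2) matrix coefficients satisfy the derivative identity ∂ t^l_{n,m}(Z) = ((l−m) t^{l−½}_{n+½,m+½}(Z), (l−m) t^{l−½}_{n−½,m+½}(Z); (l+m) t^{l−½}_{n+½,m−½}(Z), (l+m) t^{l−½}_{n−½,m−½}(Z)), i.e. the 2×2 matrix of partial derivatives ∂ᵢⱼ t^l_{n,m} equals the stated matrix of lower matrix coefficients. -/

import Mathlib

noncomputable section

/-- The SU(2) matrix coefficient `t^l_{n,m}` in the parametrization `a = l − m`,
`b = l + m`, `k = n − l`:
`T a b k (Z) = (1/2πi) ∮_{|s|=1} (s z₁₁ + z₂₁)^a (s z₁₂ + z₂₂)^b s^k ds/s`,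
regarded as a polynomial in the entries of the 2×2 complex matrix `Z`. -/
def Tc (a b : ℕ) (k : ℤ) (Z : Fin 2 → Fin 2 → ℂ) : ℂ :=
  (2 * (Real.pi : ℂ) * Complex.I)⁻¹ *
    circleIntegral (fun s => (s * Z 0 0 + Z 1 0) ^ a * (s * Z 0 1 + Z 1 1) ^ b * s ^ (k - 1)) 0 1

/-- The partial derivative `∂ᵢⱼ = ∂/∂zᵢⱼ` in the entries of a 2×2 complex matrix. -/
def mpd (i j : Fin 2) (f : (Fin 2 → Fin 2 → ℂ) → ℂ) : (Fin 2 → Fin 2 → ℂ) → ℂ :=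
  fun Z => fderiv ℂ f Z (Pi.single i (Pi.single j 1))

open Finset in
def coefC (a b : ℕ) (k : ℤ) (i j : ℕ) : ℂ :=
  if (i:ℤ) + j + k = 0 then (a.choose i : ℂ) * (b.choose j : ℂ) else 0

def Psum (a b : ℕ) (k : ℤ) (Z : Fin 2 → Fin 2 → ℂ) : ℂ :=
  ∑ i ∈ Finset.range (a+1), ∑ j ∈ Finset.range (b+1),
    coefC a b k i j * Z 0 0 ^ i * Z 1 0 ^ (a - i) * Z 0 1 ^ j * Z 1 1 ^ (b - j)

lemma circ_zpow (n : ℤ) : (∮ z in C((0:ℂ), 1), z ^ n) = if n = -1 then 2 * Real.pi * Complex.I else 0 := by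
  split_ifs with hn
  · subst hn
    calc (∮ z in C((0:ℂ), 1), z ^ (-1:ℤ)) = ∮ z in C((0:ℂ), 1), (z - 0)⁻¹ := by
          rw [show (fun z : ℂ => z ^ (-1:ℤ)) = (fun z : ℂ => (z - 0)⁻¹) by funext z; rw [sub_zero, zpow_neg_one]]
      _ = 2 * Real.pi * Complex.I := circleIntegral.integral_sub_inv_of_mem_ball (by simp)
  · rw [show (fun z : ℂ => z ^ n) = (fun z : ℂ => (z - 0) ^ n) by funext z; rw [sub_zero]]
    exact circleIntegral.integral_sub_zpow_of_ne hn 0 0 1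

lemma circ_int (c : ℂ) (n : ℤ) : CircleIntegrable (fun z => c * z ^ n) 0 1 := by
  have h : CircleIntegrable (fun z : ℂ => (z - 0) ^ n) 0 1 := by
    rw [circleIntegrable_sub_zpow_iff]; right; right; simp
  simpa [CircleIntegrable, sub_zero] using h.const_mul c

lemma circ_int_sum {ι : Type*} (s : Finset ι) (f : ι → ℂ → ℂ) (c : ℂ) (R : ℝ)
    (h : ∀ i ∈ s, CircleIntegrable (f i) c R) :
    CircleIntegrable (fun z => ∑ i ∈ s, f i z) c R := by
  have h1 : IntervalIntegrable (∑ i ∈ s, fun θ => f i (circleMap c R θ))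
      MeasureTheory.volume 0 (2 * Real.pi) := IntervalIntegrable.sum s h
  have h2 : (∑ i ∈ s, fun θ => f i (circleMap c R θ))
      = fun θ => ∑ i ∈ s, f i (circleMap c R θ) := by
    funext θ; simp
  rw [h2] at h1
  exact h1

lemma circ_sum {ι : Type*} (s : Finset ι) (f : ι → ℂ → ℂ) (c : ℂ) (R : ℝ)
    (h : ∀ i ∈ s, CircleIntegrable (f i) c R) :
    (∮ z in C(c, R), ∑ i ∈ s, f i z) = ∑ i ∈ s, ∮ z in C(c, R), f i z := by
  simp only [circleIntegral, Finset.smul_sum]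
  exact intervalIntegral.integral_finset_sum fun i hi => (h i hi).out

lemma two_pi_I_ne : (2 * (Real.pi:ℂ) * Complex.I) ≠ 0 := by
  simp [Real.pi_ne_zero, Complex.I_ne_zero, Complex.ofReal_ne_zero]

lemma Tc_eq_Psum (a b : ℕ) (k : ℤ) (Z : Fin 2 → Fin 2 → ℂ) : Tc a b k Z = Psum a b k Z := by
  have hcong : circleIntegral (fun s => (s * Z 0 0 + Z 1 0) ^ a * (s * Z 0 1 + Z 1 1) ^ b * s ^ (k - 1)) 0 1
      = ∮ s in C((0:ℂ), 1), ∑ i ∈ Finset.range (a+1), ∑ j ∈ Finset.range (b+1),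
          ((a.choose i : ℂ) * (b.choose j : ℂ) * Z 0 0 ^ i * Z 1 0 ^ (a - i) * Z 0 1 ^ j
            * Z 1 1 ^ (b - j)) * s ^ ((i:ℤ) + j + k - 1) := by
    refine circleIntegral.integral_congr zero_le_one fun s hs => ?_
    have hs0 : s ≠ 0 := by
      intro h; rw [h] at hs; simp [Metric.mem_sphere] at hs
    rw [add_pow, add_pow, Finset.sum_mul_sum, Finset.sum_mul]
    refine Finset.sum_congr rfl fun i hi => ?_
    rw [Finset.sum_mul]
    refine Finset.sum_congr rfl fun j hj => ?_
    have : s ^ ((i:ℤ) + j + k - 1) = s ^ i * s ^ j * s ^ (k - 1) := by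
      rw [show (i:ℤ) + j + k - 1 = (i:ℤ) + ((j:ℤ) + (k - 1)) by ring,
        zpow_add₀ hs0, zpow_add₀ hs0, zpow_natCast, zpow_natCast, mul_assoc]
    rw [this, mul_pow, mul_pow]
    ring
  rw [Tc, hcong,
    circ_sum _ _ _ _ (fun i _ => circ_int_sum _ _ _ _ (fun j _ => circ_int _ _)),
    Finset.mul_sum, Psum]
  refine Finset.sum_congr rfl fun i hi => ?_
  rw [circ_sum _ _ _ _ (fun j _ => circ_int _ _), Finset.mul_sum]
  refine Finset.sum_congr rfl fun j hj => ?_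
  rw [circleIntegral.integral_const_mul, circ_zpow, coefC]
  by_cases hij : (i:ℤ) + j + k = 0
  · rw [if_pos hij, if_pos (by omega)]
    have h2 : ∀ C : ℂ, (2 * (Real.pi:ℂ) * Complex.I)⁻¹ * (C * (2 * Real.pi * Complex.I)) = C := by
      intro C; rw [mul_comm C]; exact inv_mul_cancel_left₀ two_pi_I_ne C
    rw [h2]
  · rw [if_neg hij, if_neg (by omega)]
    simp

lemma coord_diff (r c : Fin 2) : Differentiable ℂ (fun W : Fin 2 → Fin 2 → ℂ => W r c) :=
  ((ContinuousLinearMap.proj (R := ℂ) (φ := fun _ : Fin 2 => ℂ) c).comp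
    (ContinuousLinearMap.proj (R := ℂ) (φ := fun _ : Fin 2 => Fin 2 → ℂ) r)).differentiable

lemma Psum_diff (a b : ℕ) (k : ℤ) : Differentiable ℂ (Psum a b k) := by
  unfold Psum
  apply Differentiable.fun_sum; intro i _
  apply Differentiable.fun_sum; intro j _
  exact ((((differentiable_const _).mul ((coord_diff 0 0).pow i)).mul
    ((coord_diff 1 0).pow (a-i))).mul ((coord_diff 0 1).pow j)).mul ((coord_diff 1 1).pow (b-j))

lemma mpd_eq_deriv (f : (Fin 2 → Fin 2 → ℂ) → ℂ) (hf : Differentiable ℂ f) (r c : Fin 2)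
    (Z : Fin 2 → Fin 2 → ℂ) :
    mpd r c f Z = deriv (fun t : ℂ => f (Z + t • (Pi.single r (Pi.single c 1) : Fin 2 → Fin 2 → ℂ))) 0 := by
  have hline : HasDerivAt (fun t : ℂ => Z + t • (Pi.single r (Pi.single c 1) : Fin 2 → Fin 2 → ℂ))
      (Pi.single r (Pi.single c 1)) 0 := by
    simpa using ((hasDerivAt_id (0:ℂ)).smul_const (Pi.single r (Pi.single c 1) : Fin 2 → Fin 2 → ℂ)).const_add Z
  have h0 : Z + (0:ℂ) • (Pi.single r (Pi.single c 1) : Fin 2 → Fin 2 → ℂ) = Z := by simp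
  have hF : HasFDerivAt f (fderiv ℂ f Z) (Z + (0:ℂ) • (Pi.single r (Pi.single c 1) : Fin 2 → Fin 2 → ℂ)) := by
    rw [h0]; exact (hf Z).hasFDerivAt
  have hcomp := hF.comp_hasDerivAt 0 hline
  exact (hcomp.deriv).symm

lemma line_apply (r c r' c' : Fin 2) (Z : Fin 2 → Fin 2 → ℂ) (t : ℂ) :
    (Z + t • (Pi.single r (Pi.single c 1) : Fin 2 → Fin 2 → ℂ)) r' c'
      = Z r' c' + (if r' = r ∧ c' = c then t else 0) := by
  by_cases h1 : r' = r
  · subst h1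
    by_cases h2 : c' = c
    · subst h2; simp
    · simp [h2, Pi.single_eq_of_ne h2]
  · simp [h1, Pi.single_eq_of_ne h1]

lemma hb_line (x : ℂ) : HasDerivAt (fun t : ℂ => x + t) 1 0 := by
  simpa using (hasDerivAt_id (0:ℂ)).const_add x

lemma chooseL1 (a i : ℕ) : a.choose (i+1) * (i+1) = a * (a-1).choose i := by
  cases a with
  | zero => simp
  | succ n => simpa using (Nat.add_one_mul_choose_eq n i).symm

lemma chooseL2 (a i : ℕ) : a.choose i * (a - i) = a * (a-1).choose i := by
  rw [← Nat.choose_succ_right_eq, chooseL1]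

lemma mpd_Psum00 (a b : ℕ) (k : ℤ) (Z : Fin 2 → Fin 2 → ℂ) :
    mpd 0 0 (Psum a b k) Z = (a:ℂ) * Psum (a-1) b (k+1) Z := by
  rw [mpd_eq_deriv _ (Psum_diff a b k) 0 0 Z]
  have key : (fun t : ℂ => Psum a b k (Z + t • (Pi.single 0 (Pi.single 0 1) : Fin 2 → Fin 2 → ℂ)))
      = fun t => ∑ i ∈ Finset.range (a+1), ∑ j ∈ Finset.range (b+1),
        coefC a b k i j * (Z 0 0 + t)^i * Z 1 0 ^ (a-i) * Z 0 1 ^ j * Z 1 1 ^ (b-j) := by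
    funext t
    simp only [Psum, line_apply]
    norm_num
  rw [key]
  have hD : HasDerivAt (fun t : ℂ => ∑ i ∈ Finset.range (a+1), ∑ j ∈ Finset.range (b+1),
      coefC a b k i j * (Z 0 0 + t)^i * Z 1 0 ^ (a-i) * Z 0 1 ^ j * Z 1 1 ^ (b-j))
      (∑ i ∈ Finset.range (a+1), ∑ j ∈ Finset.range (b+1),
        coefC a b k i j * ((i:ℂ) * Z 0 0 ^ (i-1)) * Z 1 0 ^ (a-i) * Z 0 1 ^ j * Z 1 1 ^ (b-j)) 0 := by
    apply HasDerivAt.fun_sum; intro i _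
    apply HasDerivAt.fun_sum; intro j _
    have h := (((((hb_line (Z 0 0)).pow i).const_mul (coefC a b k i j)).mul_const
      (Z 1 0 ^ (a-i))).mul_const (Z 0 1 ^ j)).mul_const (Z 1 1 ^ (b-j))
    simpa using h
  rw [hD.deriv]
  cases a with
  | zero => simp [Psum]
  | succ a =>
  rw [Psum, Finset.mul_sum, Finset.sum_range_succ']
  have h0 : (∑ j ∈ Finset.range (b+1),
      coefC (a+1) b k 0 j * (((0:ℕ):ℂ) * Z 0 0 ^ (0-1)) * Z 1 0 ^ (a+1-0) * Z 0 1 ^ j * Z 1 1 ^ (b-j)) = 0 := by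
    simp
  rw [h0, add_zero]
  refine Finset.sum_congr rfl fun i hi => ?_
  rw [Finset.mul_sum]
  refine Finset.sum_congr rfl fun j hj => ?_
  simp only [coefC]
  by_cases hcond : (i:ℤ) + j + (k+1) = 0
  · rw [if_pos hcond, if_pos (by push_cast; omega)]
    have hch : (((a+1).choose (i+1) * (i+1) : ℕ) : ℂ) = (((a+1) * (a.choose i) : ℕ) : ℂ) := by
      rw [chooseL1]; norm_num
    push_cast at hch ⊢
    linear_combination (Z 0 0 ^ i * Z 1 0 ^ (a-i) * Z 0 1 ^ j * Z 1 1 ^ (b-j) * (b.choose j : ℂ)) * hch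
  · rw [if_neg hcond, if_neg (by push_cast; omega)]
    ring

lemma mpd_Psum10 (a b : ℕ) (k : ℤ) (Z : Fin 2 → Fin 2 → ℂ) :
    mpd 1 0 (Psum a b k) Z = (a:ℂ) * Psum (a-1) b k Z := by
  rw [mpd_eq_deriv _ (Psum_diff a b k) 1 0 Z]
  have key : (fun t : ℂ => Psum a b k (Z + t • (Pi.single 1 (Pi.single 0 1) : Fin 2 → Fin 2 → ℂ)))
      = fun t => ∑ i ∈ Finset.range (a+1), ∑ j ∈ Finset.range (b+1),
        coefC a b k i j * Z 0 0 ^ i * (Z 1 0 + t) ^ (a-i) * Z 0 1 ^ j * Z 1 1 ^ (b-j) := by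
    funext t
    simp only [Psum, line_apply]
    norm_num
  rw [key]
  have hD : HasDerivAt (fun t : ℂ => ∑ i ∈ Finset.range (a+1), ∑ j ∈ Finset.range (b+1),
      coefC a b k i j * Z 0 0 ^ i * (Z 1 0 + t) ^ (a-i) * Z 0 1 ^ j * Z 1 1 ^ (b-j))
      (∑ i ∈ Finset.range (a+1), ∑ j ∈ Finset.range (b+1),
        coefC a b k i j * Z 0 0 ^ i * (((a-i : ℕ):ℂ) * Z 1 0 ^ (a-i-1)) * Z 0 1 ^ j * Z 1 1 ^ (b-j)) 0 := by
    apply HasDerivAt.fun_sum; intro i _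
    apply HasDerivAt.fun_sum; intro j _
    have h := (((((hb_line (Z 1 0)).pow (a-i)).const_mul (coefC a b k i j * Z 0 0 ^ i)).mul_const
      (Z 0 1 ^ j)).mul_const (Z 1 1 ^ (b-j)))
    simpa using h
  rw [hD.deriv]
  cases a with
  | zero => simp [Psum]
  | succ a =>
  rw [Psum, Finset.mul_sum, Finset.sum_range_succ]
  have h0 : (∑ j ∈ Finset.range (b+1),
      coefC (a+1) b k (a+1) j * Z 0 0 ^ (a+1) * ((((a+1)-(a+1) : ℕ):ℂ) * Z 1 0 ^ ((a+1)-(a+1)-1))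
        * Z 0 1 ^ j * Z 1 1 ^ (b-j)) = 0 := by
    simp
  rw [h0, add_zero]
  refine Finset.sum_congr rfl fun i hi => ?_
  rw [Finset.mul_sum]
  refine Finset.sum_congr rfl fun j hj => ?_
  simp only [coefC]
  by_cases hcond : (i:ℤ) + j + k = 0
  · rw [if_pos hcond, if_pos hcond]
    have hch : (((a+1).choose i * (a+1-i) : ℕ) : ℂ) = (((a+1) * (a.choose i) : ℕ) : ℂ) := by
      rw [chooseL2]; norm_num
    push_cast at hch ⊢
    rw [show a + 1 - i - 1 = a - i by omega]
    linear_combination (Z 0 0 ^ i * Z 1 0 ^ (a-i) * Z 0 1 ^ j * Z 1 1 ^ (b-j) * (b.choose j : ℂ)) * hch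
  · rw [if_neg hcond, if_neg hcond]
    ring

lemma mpd_Psum01 (a b : ℕ) (k : ℤ) (Z : Fin 2 → Fin 2 → ℂ) :
    mpd 0 1 (Psum a b k) Z = (b:ℂ) * Psum a (b-1) (k+1) Z := by
  rw [mpd_eq_deriv _ (Psum_diff a b k) 0 1 Z]
  have key : (fun t : ℂ => Psum a b k (Z + t • (Pi.single 0 (Pi.single 1 1) : Fin 2 → Fin 2 → ℂ)))
      = fun t => ∑ i ∈ Finset.range (a+1), ∑ j ∈ Finset.range (b+1),
        coefC a b k i j * Z 0 0 ^ i * Z 1 0 ^ (a-i) * (Z 0 1 + t) ^ j * Z 1 1 ^ (b-j) := by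
    funext t
    simp only [Psum, line_apply]
    norm_num
  rw [key]
  have hD : HasDerivAt (fun t : ℂ => ∑ i ∈ Finset.range (a+1), ∑ j ∈ Finset.range (b+1),
      coefC a b k i j * Z 0 0 ^ i * Z 1 0 ^ (a-i) * (Z 0 1 + t) ^ j * Z 1 1 ^ (b-j))
      (∑ i ∈ Finset.range (a+1), ∑ j ∈ Finset.range (b+1),
        coefC a b k i j * Z 0 0 ^ i * Z 1 0 ^ (a-i) * ((j:ℂ) * Z 0 1 ^ (j-1)) * Z 1 1 ^ (b-j)) 0 := by
    apply HasDerivAt.fun_sum; intro i _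
    apply HasDerivAt.fun_sum; intro j _
    have h := ((((hb_line (Z 0 1)).pow j).const_mul
      (coefC a b k i j * Z 0 0 ^ i * Z 1 0 ^ (a-i))).mul_const (Z 1 1 ^ (b-j)))
    simpa using h
  rw [hD.deriv]
  cases b with
  | zero => simp [Psum]
  | succ b =>
  rw [Psum, Finset.mul_sum]
  refine Finset.sum_congr rfl fun i hi => ?_
  rw [Finset.mul_sum, Finset.sum_range_succ']
  have h0 : coefC a (b+1) k i 0 * Z 0 0 ^ i * Z 1 0 ^ (a-i) * (((0:ℕ):ℂ) * Z 0 1 ^ (0-1))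
      * Z 1 1 ^ (b+1-0) = 0 := by
    simp
  rw [h0, add_zero]
  refine Finset.sum_congr rfl fun j hj => ?_
  simp only [coefC]
  by_cases hcond : (i:ℤ) + j + (k+1) = 0
  · rw [if_pos hcond, if_pos (by push_cast; omega)]
    have hch : (((b+1).choose (j+1) * (j+1) : ℕ) : ℂ) = (((b+1) * (b.choose j) : ℕ) : ℂ) := by
      rw [chooseL1]; norm_num
    push_cast at hch ⊢
    linear_combination (Z 0 0 ^ i * Z 1 0 ^ (a-i) * Z 0 1 ^ j * Z 1 1 ^ (b-j) * (a.choose i : ℂ)) * hch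
  · rw [if_neg hcond, if_neg (by push_cast; omega)]
    ring

lemma mpd_Psum11 (a b : ℕ) (k : ℤ) (Z : Fin 2 → Fin 2 → ℂ) :
    mpd 1 1 (Psum a b k) Z = (b:ℂ) * Psum a (b-1) k Z := by
  rw [mpd_eq_deriv _ (Psum_diff a b k) 1 1 Z]
  have key : (fun t : ℂ => Psum a b k (Z + t • (Pi.single 1 (Pi.single 1 1) : Fin 2 → Fin 2 → ℂ)))
      = fun t => ∑ i ∈ Finset.range (a+1), ∑ j ∈ Finset.range (b+1),
        coefC a b k i j * Z 0 0 ^ i * Z 1 0 ^ (a-i) * Z 0 1 ^ j * (Z 1 1 + t) ^ (b-j) := by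
    funext t
    simp only [Psum, line_apply]
    norm_num
  rw [key]
  have hD : HasDerivAt (fun t : ℂ => ∑ i ∈ Finset.range (a+1), ∑ j ∈ Finset.range (b+1),
      coefC a b k i j * Z 0 0 ^ i * Z 1 0 ^ (a-i) * Z 0 1 ^ j * (Z 1 1 + t) ^ (b-j))
      (∑ i ∈ Finset.range (a+1), ∑ j ∈ Finset.range (b+1),
        coefC a b k i j * Z 0 0 ^ i * Z 1 0 ^ (a-i) * Z 0 1 ^ j * (((b-j : ℕ):ℂ) * Z 1 1 ^ (b-j-1))) 0 := by
    apply HasDerivAt.fun_sum; intro i _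
    apply HasDerivAt.fun_sum; intro j _
    have h := (((hb_line (Z 1 1)).pow (b-j)).const_mul
      (coefC a b k i j * Z 0 0 ^ i * Z 1 0 ^ (a-i) * Z 0 1 ^ j))
    simpa using h
  rw [hD.deriv]
  cases b with
  | zero => simp [Psum]
  | succ b =>
  rw [Psum, Finset.mul_sum]
  refine Finset.sum_congr rfl fun i hi => ?_
  rw [Finset.mul_sum, Finset.sum_range_succ]
  have h0 : coefC a (b+1) k i (b+1) * Z 0 0 ^ i * Z 1 0 ^ (a-i) * Z 0 1 ^ (b+1)
      * ((((b+1)-(b+1) : ℕ):ℂ) * Z 1 1 ^ ((b+1)-(b+1)-1)) = 0 := by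
    simp
  rw [h0, add_zero]
  refine Finset.sum_congr rfl fun j hj => ?_
  simp only [coefC]
  by_cases hcond : (i:ℤ) + j + k = 0
  · rw [if_pos hcond, if_pos hcond]
    have hch : (((b+1).choose j * (b+1-j) : ℕ) : ℂ) = (((b+1) * (b.choose j) : ℕ) : ℂ) := by
      rw [chooseL2]; norm_num
    push_cast at hch ⊢
    rw [show b + 1 - j - 1 = b - j by omega]
    linear_combination (Z 0 0 ^ i * Z 1 0 ^ (a-i) * Z 0 1 ^ j * Z 1 1 ^ (b-j) * (a.choose i : ℂ)) * hch
  · rw [if_neg hcond, if_neg hcond]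
    ring

/-- the derivative identity for SU(2) matrix coefficients.  With
`t^l_{n,m} = T (l−m) (l+m) (n−l)` (so `a = l−m`, `b = l+m`, `k = n−l` with
`−l ≤ m,n ≤ l`, i.e. `−(a+b) ≤ k ≤ 0`):
`∂₁₁ t^l_{n,m} = (l−m) t^{l−½}_{n+½,m+½}`, `∂₂₁ t^l_{n,m} = (l−m) t^{l−½}_{n−½,m+½}`,
`∂₁₂ t^l_{n,m} = (l+m) t^{l−½}_{n+½,m−½}`, `∂₂₂ t^l_{n,m} = (l+m) t^{l−½}_{n−½,m−½}`. -/
theorem deriv_matrix_coefficients (a b : ℕ) (k : ℤ)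
    (hk1 : -(a + b : ℤ) ≤ k) (hk2 : k ≤ 0) :
    ∀ Z : Fin 2 → Fin 2 → ℂ,
      mpd 0 0 (Tc a b k) Z = (a : ℂ) * Tc (a - 1) b (k + 1) Z ∧
      mpd 1 0 (Tc a b k) Z = (a : ℂ) * Tc (a - 1) b k Z ∧
      mpd 0 1 (Tc a b k) Z = (b : ℂ) * Tc a (b - 1) (k + 1) Z ∧
      mpd 1 1 (Tc a b k) Z = (b : ℂ) * Tc a (b - 1) k Z := by
  intro Z
  have hfun : ∀ a b k, Tc a b k = Psum a b k := fun a b k => funext (Tc_eq_Psum a b k)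
  refine ⟨?_, ?_, ?_, ?_⟩
  · rw [hfun, mpd_Psum00, ← hfun]
  · rw [hfun, mpd_Psum10, ← hfun]
  · rw [hfun, mpd_Psum01, ← hfun]
  · rw [hfun, mpd_Psum11, ← hfun]
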